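/- Let (a_n) be an arithmetic sequence, (e_n) an arithmetic-type sequence associated with (a_n), and let x ∈ t_{(e_n)}(𝕋) have canonical digits (c_n) with supp(x) cofinite in ℕ. Then the set B = supp(x) \ supp^q(x) = {n : 1 ≤ c_n ≤ q_n − 2} is infinite and q-divergent. -/

import Mathlib

open Filter Topology

noncomputable section

/-- The circle group `𝕋 = ℝ/ℤ`. -/
abbrev Circle1 : Type := AddCircle (1 : ℝ)

/-- An arithmetic sequence `(a_n)_{n ≥ 1}`, with the convention `a 0 = 1`:
a strictly increasing sequence of positive integers with `1 < a 1` and `a n ∣ a (n+1)`. -/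
def IsArithSeq (a : ℕ → ℕ) : Prop :=
  a 0 = 1 ∧ StrictMono a ∧ ∀ n, a n ∣ a (n + 1)

/-- The ratio sequence: `q n = a n / a (n-1)` (so `q 1 = a 1`). -/
def ratioSeq (a : ℕ → ℕ) (n : ℕ) : ℕ := a n / a (n - 1)

/-- The subgroup of `𝕋` characterized by a sequence of integers `(u n)`. -/
def charSub (u : ℕ → ℕ) : Set Circle1 :=
  {x : Circle1 | Tendsto (fun n => (u n) • x) atTop (nhds 0)}

/-- The set `{r·a_{k-1} : k ≥ 1, 1 ≤ r ≤ q_k - 1}` whose increasing enumeration is `(d_n)`. -/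
def DSet (a : ℕ → ℕ) : Set ℕ :=
  {m | ∃ k, 1 ≤ k ∧ ∃ r, 1 ≤ r ∧ r ≤ ratioSeq a k - 1 ∧ m = r * a (k - 1)}

/-- `(d_n)` is the strictly increasing enumeration of `DSet a`. -/
def IsDSeq (a d : ℕ → ℕ) : Prop := StrictMono d ∧ Set.range d = DSet a

/-- An arithmetic-type sequence associated with the arithmetic sequence `(a_n)`:
a strictly increasing sequence of positive integers whose set of values contains all the
values `a k` (for `k ≥ 1`) and is contained in `DSet a`. -/
def IsArithTypeSeq (a e : ℕ → ℕ) : Prop :=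
  StrictMono e ∧ (∀ k, 1 ≤ k → a k ∈ Set.range e) ∧ Set.range e ⊆ DSet a

/-- `(c_n)_{n ≥ 1}` is the canonical representation of `x ∈ 𝕋` w.r.t. the arithmetic
sequence `(a_n)`: `0 ≤ c n ≤ q n - 1` for all `n ≥ 1`, `c n < q n - 1` infinitely often,
and `x = Σ_{n ≥ 1} c n / a n` in `𝕋`. -/
def IsCanonicalRep (a c : ℕ → ℕ) (x : Circle1) : Prop :=
  (∀ n, 1 ≤ n → c n ≤ ratioSeq a n - 1) ∧
  {n | 1 ≤ n ∧ c n < ratioSeq a n - 1}.Infinite ∧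
  x = ((∑' n : ℕ, (c (n + 1) : ℝ) / (a (n + 1) : ℝ) : ℝ) : Circle1)

/-- The support of a digit sequence: `supp(x) = {n ≥ 1 : c n ≠ 0}`. -/
def suppOf (c : ℕ → ℕ) : Set ℕ := {n | 1 ≤ n ∧ c n ≠ 0}


namespace CofAux

variable {a c : ℕ → ℕ}

lemma arith_pos (ha : IsArithSeq a) (n : ℕ) : 1 ≤ a n := by
  have h1 := ha.2.1.monotone (Nat.zero_le n); have h0 := ha.1; omega
lemma arith_ratio (ha : IsArithSeq a) {n : ℕ} (hn : 1 ≤ n) :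
    2 ≤ ratioSeq a n ∧ a n = ratioSeq a n * a (n - 1) := by
  have hd : a (n - 1) ∣ a n := by
    have := ha.2.2 (n - 1)
    rwa [Nat.sub_add_cancel hn] at this
  have hpos : 1 ≤ a (n - 1) := arith_pos ha _
  have heq : a n = ratioSeq a n * a (n - 1) := by
    rw [ratioSeq, Nat.div_mul_cancel hd]
  have hlt : a (n - 1) < a n := ha.2.1 (by omega)
  refine ⟨?_, heq⟩
  by_contra h
  push_neg at h
  interval_cases h' : (ratioSeq a n) <;> omega
lemma arith_two_pow (ha : IsArithSeq a) (n : ℕ) : 2 ^ n ≤ a n := by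
  induction n with
  | zero => simp [ha.1]
  | succ k ih =>
    obtain ⟨h2, heq⟩ := arith_ratio ha (n := k + 1) (by omega)
    simp only [Nat.add_sub_cancel] at heq
    calc 2 ^ (k + 1) = 2 * 2 ^ k := by ring
    _ ≤ ratioSeq a (k + 1) * a k := Nat.mul_le_mul h2 ih
    _ = a (k + 1) := heq.symm
lemma arith_dvd (ha : IsArithSeq a) {m k : ℕ} (h : m ≤ k) : a m ∣ a k := by
  induction k with
  | zero => rw [Nat.le_zero.1 h]
  | succ k ih =>
    rcases Nat.lt_or_ge m (k + 1) with h' | h'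
    · exact dvd_trans (ih (by omega)) (ha.2.2 k)
    · have : m = k + 1 := by omega
      rw [this]

def dig (a c : ℕ → ℕ) (j : ℕ) : ℝ := (c (j + 1) : ℝ) / (a (j + 1) : ℝ)

lemma dig_nonneg (j : ℕ) : 0 ≤ dig a c j := by unfold dig; positivity

lemma dig_le (ha : IsArithSeq a) (hdig : ∀ n, 1 ≤ n → c n ≤ ratioSeq a n - 1) (j : ℕ) :
    dig a c j ≤ 1 / (a j : ℝ) - 1 / (a (j + 1) : ℝ) := by
  obtain ⟨h2, heq⟩ := arith_ratio ha (n := j + 1) (by omega)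
  simp only [Nat.add_sub_cancel] at heq
  have hpos : (0 : ℝ) < a j := by exact_mod_cast arith_pos ha j
  have hpos1 : (0 : ℝ) < a (j + 1) := by exact_mod_cast arith_pos ha (j + 1)
  have hq2 : (2 : ℝ) ≤ (ratioSeq a (j + 1) : ℝ) := by exact_mod_cast h2
  have heqR : (a (j + 1) : ℝ) = (ratioSeq a (j + 1) : ℝ) * a j := by exact_mod_cast heq
  have hc : (c (j + 1) : ℝ) ≤ (ratioSeq a (j + 1) : ℝ) - 1 := by
    have h := hdig (j + 1) (by omega)
    have h' : c (j + 1) + 1 ≤ ratioSeq a (j + 1) := by omega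
    have h'' := (Nat.cast_le (α := ℝ)).2 h'
    push_cast at h''
    linarith
  have hkey : 1 / (a j : ℝ) - 1 / (a (j + 1) : ℝ)
      = ((ratioSeq a (j + 1) : ℝ) - 1) / (a (j + 1) : ℝ) := by
    rw [heqR]
    field_simp
  rw [hkey]
  unfold dig
  gcongr

lemma dig_summable (ha : IsArithSeq a) (hdig : ∀ n, 1 ≤ n → c n ≤ ratioSeq a n - 1) :
    Summable (dig a c) := by
  apply Summable.of_nonneg_of_le (fun j => dig_nonneg j) (fun j => ?_)
    (summable_geometric_of_lt_one (by norm_num) (by norm_num : (1/2 : ℝ) < 1))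
  have h1 := dig_le ha hdig j
  have hpos1 : (0 : ℝ) < a (j + 1) := by exact_mod_cast arith_pos ha (j + 1)
  have h2 : (1 : ℝ) / a j ≤ (1 / 2) ^ j := by
    rw [div_pow, one_pow]
    apply one_div_le_one_div_of_le (by positivity)
    exact_mod_cast arith_two_pow ha j
  have h3 : (0 : ℝ) < 1 / (a (j + 1) : ℝ) := by positivity
  linarith

lemma tail_le (ha : IsArithSeq a) (hdig : ∀ n, 1 ≤ n → c n ≤ ratioSeq a n - 1) (n : ℕ) :
    ∑' j, dig a c (j + n) ≤ 1 / (a n : ℝ) := by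
  have hs : Summable (fun j => dig a c (j + n)) :=
    (summable_nat_add_iff n).2 (dig_summable ha hdig)
  apply hs.tsum_le_of_sum_le
  intro s
  set N := s.sup id + 1 with hN
  have hsub : s ⊆ Finset.range N := by
    intro i hi
    have := Finset.le_sup (f := id) hi
    simp only [id] at this
    exact Finset.mem_range.2 (by omega)
  have h1 : ∑ i ∈ s, dig a c (i + n) ≤ ∑ i ∈ Finset.range N, dig a c (i + n) :=
    Finset.sum_le_sum_of_subset_of_nonneg hsub (fun i _ _ => dig_nonneg _)
  have h2 : ∑ i ∈ Finset.range N, dig a c (i + n)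
      ≤ ∑ i ∈ Finset.range N, ((1 : ℝ) / a (i + n) - 1 / a (i + 1 + n)) := by
    apply Finset.sum_le_sum
    intro i _
    have := dig_le ha hdig (i + n)
    rw [show i + 1 + n = i + n + 1 from by omega]
    exact this
  have h3 : ∑ i ∈ Finset.range N, ((1 : ℝ) / a (i + n) - 1 / a (i + 1 + n))
      = 1 / (a (0 + n) : ℝ) - 1 / a (N + n) :=
    Finset.sum_range_sub' (f := fun i => (1 : ℝ) / a (i + n)) N
  have h4 : (0 : ℝ) ≤ 1 / a (N + n) := by positivity
  rw [h3] at h2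
  simp only [Nat.zero_add] at h2
  linarith

lemma est (ha : IsArithSeq a) (hdig : ∀ n, 1 ≤ n → c n ≤ ratioSeq a n - 1) {n : ℕ}
    (hn : 1 ≤ n) :
    (c n : ℝ) / a n ≤ ∑' j, dig a c (j + (n - 1)) ∧
      ∑' j, dig a c (j + (n - 1)) ≤ (c n : ℝ) / a n + 1 / a n := by
  have hs : Summable (fun j => dig a c (j + (n - 1))) :=
    (summable_nat_add_iff (n - 1)).2 (dig_summable ha hdig)
  have h0 : ∑' j, dig a c (j + (n - 1))
      = dig a c (0 + (n - 1)) + ∑' j, dig a c (j + 1 + (n - 1)) := hs.tsum_eq_zero_add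
  have hshift : (fun j => dig a c (j + 1 + (n - 1))) = fun j => dig a c (j + n) := by
    funext j; congr 1; omega
  have hfn : dig a c (0 + (n - 1)) = (c n : ℝ) / a n := by
    unfold dig
    rw [show 0 + (n - 1) + 1 = n from by omega]
  rw [hshift, hfn] at h0
  have htail_nonneg : 0 ≤ ∑' j, dig a c (j + n) :=
    tsum_nonneg (fun j => dig_nonneg _)
  have htail := tail_le ha hdig n
  constructor
  · rw [h0]; linarith
  · rw [h0]; linarith







lemma coe_nsmul (m : ℕ) (r : ℝ) :
    (m • (r : AddCircle (1:ℝ))) = ((m * r : ℝ) : AddCircle (1:ℝ)) := by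
  induction m with
  | zero => simp
  | succ k ih =>
    rw [succ_nsmul, ih, ← QuotientAddGroup.mk_add]
    push_cast
    ring_nf

lemma coe_nat_zero (m : ℕ) : (((m : ℝ)) : AddCircle (1:ℝ)) = 0 := by
  rw [AddCircle.coe_eq_zero_iff]; exact ⟨m, by simp⟩

lemma circle_eq (ha : IsArithSeq a) (hdig : ∀ n, 1 ≤ n → c n ≤ ratioSeq a n - 1)
    {n : ℕ} (hn : 1 ≤ n) :
    (a (n-1)) • ((∑' j, dig a c j : ℝ) : AddCircle (1:ℝ))
      = (((a (n-1) : ℝ) * ∑' j, dig a c (j + (n-1)) : ℝ) : AddCircle (1:ℝ)) := by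
  have hsum := dig_summable ha hdig
  have hsplit := hsum.sum_add_tsum_nat_add (n-1)
  rw [coe_nsmul, ← hsplit, mul_add]
  set m : ℕ := ∑ i ∈ Finset.range (n-1), c (i+1) * (a (n-1) / a (i+1)) with hm
  have hhead : (a (n-1):ℝ) * (∑ i ∈ Finset.range (n-1), dig a c i) = (m:ℝ) := by
    rw [hm, Nat.cast_sum, Finset.mul_sum]
    apply Finset.sum_congr rfl
    intro i hi
    have hile : i + 1 ≤ n - 1 := by have := Finset.mem_range.1 hi; omega
    have hdv : a (i+1) ∣ a (n-1) := arith_dvd ha hile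
    have hpos : (0:ℝ) < a (i+1) := by exact_mod_cast arith_pos ha (i+1)
    rw [Nat.cast_mul, Nat.cast_div hdv (ne_of_gt hpos)]
    unfold dig
    ring
  rw [hhead, QuotientAddGroup.mk_add, coe_nat_zero, zero_add]

lemma norm_lower {t δ : ℝ} (hδ : 0 < δ) (h1 : δ ≤ t) (h2 : t ≤ 1 - δ) :
    δ ≤ ‖(t : AddCircle (1:ℝ))‖ := by
  rw [AddCircle.norm_eq]
  simp only [inv_one, one_mul, mul_one]
  rcases le_or_gt ((round t : ℤ) : ℝ) 0 with h | h
  · rw [le_abs]; left; linarith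
  · have h0 : (0:ℤ) < round t := by exact_mod_cast h
    have h1' : (1:ℝ) ≤ ((round t : ℤ) : ℝ) := by exact_mod_cast h0
    rw [le_abs]; right; linarith


end CofAux

/-- if `x ∈ t_{(e_n)}(𝕋)` has cofinite support, then
`B = supp(x) \ supp^q(x) = {n ≥ 1 : 1 ≤ c n ≤ q n - 2}` is infinite and `q`-divergent. -/
theorem cofinite_support_structure (a e : ℕ → ℕ) (ha : IsArithSeq a)
    (he : IsArithTypeSeq a e) (x : Circle1) (hx : x ∈ charSub e) (c : ℕ → ℕ)
    (hc : IsCanonicalRep a c x) (hcof : ({n | 1 ≤ n} \ suppOf c).Finite) :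
    letI B : Set ℕ := {n | 1 ≤ n ∧ 1 ≤ c n ∧ c n ≤ ratioSeq a n - 2}
    B.Infinite ∧ Tendsto (fun n => ratioSeq a n) (atTop ⊓ 𝓟 B) atTop := by
  obtain ⟨hdig, hinf, hX⟩ := hc
  constructor
  · -- B is infinite
    apply Set.Infinite.mono (t := {n | 1 ≤ n ∧ 1 ≤ c n ∧ c n ≤ ratioSeq a n - 2})
      ?_ (hinf.diff hcof)
    intro n hn
    obtain ⟨⟨hn1, hlt⟩, hnF⟩ := hn
    have hq2 := (CofAux.arith_ratio ha hn1).1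
    have hcne : c n ≠ 0 := by
      by_contra hc0
      exact hnF ⟨hn1, fun hsup => hsup.2 hc0⟩
    exact ⟨hn1, by omega, by omega⟩
  · -- q-divergence
    by_contra hT
    rw [tendsto_atTop] at hT
    push_neg at hT
    obtain ⟨M, hM⟩ := hT
    have hfreq : ∀ N, ∃ n ≥ N, n ∈ {n | 1 ≤ n ∧ 1 ≤ c n ∧ c n ≤ ratioSeq a n - 2}
        ∧ ratioSeq a n < M := by
      have := frequently_inf_principal.1 hM
      rw [frequently_atTop] at this
      intro N
      obtain ⟨n, hn, hnB, hnq⟩ := this N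
      exact ⟨n, hn, hnB, by omega⟩
    -- M ≥ 3
    obtain ⟨n₀, -, hn₀B, hn₀q⟩ := hfreq 0
    have hM3 : 3 ≤ M := by
      have := (CofAux.arith_ratio ha hn₀B.1).1
      omega
    set δ : ℝ := 1 / (M : ℝ) with hδdef
    have hδ : 0 < δ := by
      have : (0:ℝ) < (M:ℝ) := by exact_mod_cast (by omega : 0 < M)
      positivity
    obtain ⟨N0, hN0⟩ : ∃ N0, ∀ m ≥ N0, ‖e m • x‖ < δ := by
      have h := Metric.tendsto_atTop.1 hx δ hδ
      obtain ⟨N, hN⟩ := h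
      exact ⟨N, fun m hm => by simpa [dist_zero_right] using hN m hm⟩
    obtain ⟨n, hnge, hnB, hnq⟩ := hfreq (e N0 + 2)
    obtain ⟨hn1, hcn1, hcn2⟩ := hnB
    have hn2 : 2 ≤ n := by omega
    obtain ⟨m, hm⟩ := he.2.1 (n - 1) (by omega)
    have hagen : e N0 < a (n - 1) := by
      have h1 : n - 1 ≤ a (n - 1) := ha.2.1.le_apply
      omega
    have hmN0 : N0 < m := by
      by_contra h
      push_neg at h
      have := he.1.monotone h
      omega
    have hnorm := hN0 m (le_of_lt hmN0)
    -- rewrite e m • x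
    have hX' : x = ((∑' j, CofAux.dig a c j : ℝ) : Circle1) := hX
    rw [hm, hX', CofAux.circle_eq ha hdig (by omega : 1 ≤ n)] at hnorm
    -- bounds
    have hq2 := (CofAux.arith_ratio ha hn1).1
    have haeq := (CofAux.arith_ratio ha hn1).2
    set T : ℝ := ∑' j, CofAux.dig a c (j + (n - 1)) with hTdef
    set A : ℝ := (a (n - 1) : ℝ) with hAdef
    set Q : ℝ := (ratioSeq a n : ℝ) with hQdef
    set cn : ℝ := (c n : ℝ) with hcndef
    have hA : 0 < A := by
      rw [hAdef]; exact_mod_cast CofAux.arith_pos ha (n - 1)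
    have hQ2 : (2:ℝ) ≤ Q := by rw [hQdef]; exact_mod_cast hq2
    have hQ0 : 0 < Q := by linarith
    have hanR : ((a n : ℕ) : ℝ) = Q * A := by
      rw [hQdef, hAdef]; exact_mod_cast haeq
    obtain ⟨hest1, hest2⟩ := CofAux.est ha hdig hn1
    rw [hanR] at hest1 hest2
    have hc1 : (1:ℝ) ≤ cn := by rw [hcndef]; exact_mod_cast hcn1
    have hc2 : cn ≤ Q - 2 := by
      have h' : c n + 2 ≤ ratioSeq a n := by omega
      have h'' := (Nat.cast_le (α := ℝ)).2 h'
      push_cast at h''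
      rw [hcndef, hQdef]
      linarith
    have he1 : A * (cn / (Q * A)) = cn / Q := by
      field_simp
    have he2 : A * (cn / (Q * A) + 1 / (Q * A)) = (cn + 1) / Q := by
      field_simp
    have hL1 : 1 / Q ≤ A * T := by
      have h1 : A * (cn / (Q * A)) ≤ A * T := by
        apply mul_le_mul_of_nonneg_left hest1 (le_of_lt hA)
      rw [he1] at h1
      have h2 : 1 / Q ≤ cn / Q := by gcongr
      linarith
    have hL2 : A * T ≤ 1 - 1 / Q := by
      have h1 : A * T ≤ A * (cn / (Q * A) + 1 / (Q * A)) := by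
        apply mul_le_mul_of_nonneg_left hest2 (le_of_lt hA)
      rw [he2] at h1
      have h2 : (cn + 1) / Q ≤ (Q - 1) / Q := by gcongr; linarith
      have h3 : (Q - 1) / Q = 1 - 1 / Q := by
        field_simp
      linarith
    have hQM : Q < (M : ℝ) := by rw [hQdef]; exact_mod_cast hnq
    have hδQ : δ ≤ 1 / Q := by
      rw [hδdef]
      apply one_div_le_one_div_of_le hQ0 (le_of_lt hQM)
    have hlow := CofAux.norm_lower hδ (le_trans hδQ hL1) (by linarith : A * T ≤ 1 - δ)
    linarith
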